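/- arXiv:2009.07770 — 5 statements merged into one kernel-verified Lean document; each statement's English description precedes it below -/
import Mathlib

section
/- Let c, k ≥ 1 and v ≥ 1 be natural numbers, let v₀, v₁, ..., v_k be vectors in ℕ^c with ‖v_j‖₁ ≤ v for all 0 ≤ j ≤ k and ‖v_j‖₁ ≥ 1 for all 1 ≤ j ≤ k. Let a₁, ..., a_k ∈ ℕ and set h = v₀ + Σ_{j=1}^{k} a_j v_j and n = ‖h‖₁. Let n₀ ≤ n be a positive natural number and for each j let a'_j be a nearest integer to a_j·n₀/n (so |a'_j − a_j·n₀/n| ≤ 1/2). Set h' = v₀ + Σ_{j=1}^{k} a'_j v_j. Then ‖h'‖₁ ≥ n₀ − (k+1)·v. -/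
/-- Rounding coefficients of a linear combination down to target size `n₀`:
lower bound `‖h'‖₁ ≥ n₀ - (k+1)·v` on the L1 norm of the rounded histogram. -/
theorem rounded_histogram_norm_lower_bound
    (c k v : ℕ) (hc : 1 ≤ c) (hk : 1 ≤ k) (hv : 1 ≤ v)
    (v0 : Fin c → ℕ) (V : Fin k → Fin c → ℕ)
    (hv0 : ∑ i, v0 i ≤ v) (hV : ∀ j, ∑ i, V j i ≤ v) (hV1 : ∀ j, 1 ≤ ∑ i, V j i)
    (a : Fin k → ℕ) (n : ℕ) (hn : n = ∑ i, (v0 i + ∑ j, a j * V j i))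
    (n0 : ℕ) (hn0pos : 0 < n0) (hn0 : n0 ≤ n)
    (a' : Fin k → ℕ) (ha' : ∀ j, |(a' j : ℚ) - (a j : ℚ) * n0 / n| ≤ 1 / 2) :
    (n0 : ℚ) - (k + 1) * v ≤ ((∑ i, (v0 i + ∑ j, a' j * V j i) : ℕ) : ℚ) := by
  have hnpos : 0 < n := lt_of_lt_of_le hn0pos hn0
  have hnQ : (0 : ℚ) < n := by exact_mod_cast hnpos
  set N : Fin k → ℕ := fun j => ∑ i, V j i with hN
  have hswap : ∀ b : Fin k → ℕ, (∑ i, (v0 i + ∑ j, b j * V j i))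
      = (∑ i, v0 i) + ∑ j, b j * N j := by
    intro b
    rw [Finset.sum_add_distrib, Finset.sum_comm]
    simp [hN, Finset.mul_sum]
  have hn' : n = (∑ i, v0 i) + ∑ j, a j * N j := by rw [hn, hswap]
  rw [hswap a']
  push_cast
  have hnQ' : (n : ℚ) = (∑ i, (v0 i : ℚ)) + ∑ j, (a j : ℚ) * N j := by
    rw [hn']; push_cast; ring
  -- termwise lower bound
  have key : ∀ j ∈ Finset.univ, ((a j : ℚ) * N j) * (n0 / n) - (v : ℚ) / 2
      ≤ (a' j : ℚ) * N j := by
    intro j _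
    have h1 := abs_le.mp (ha' j)
    have hNle : (N j : ℚ) ≤ v := by exact_mod_cast hV j
    have hNpos : (0 : ℚ) ≤ N j := by positivity
    have h2 : ((a j : ℚ) * n0 / n - 1/2) * N j ≤ (a' j : ℚ) * N j :=
      mul_le_mul_of_nonneg_right (by linarith [h1.1]) hNpos
    have heq : ((a j : ℚ) * n0 / n - 1/2) * N j
        = (a j : ℚ) * N j * (n0 / n) - (N j : ℚ) / 2 := by ring
    rw [heq] at h2
    linarith
  have hsumle := Finset.sum_le_sum key
  rw [Finset.sum_sub_distrib, ← Finset.sum_mul, Finset.sum_const, Finset.card_univ,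
    Fintype.card_fin] at hsumle
  have hS : (∑ j, (a j : ℚ) * N j) = (n : ℚ) - ∑ i, (v0 i : ℚ) := by
    rw [hnQ']; ring
  rw [hS] at hsumle
  have hv0Q : (∑ i, (v0 i : ℚ)) ≤ v := by
    have := hv0; push_cast [← Nat.cast_sum]; exact_mod_cast this
  have hv0nn : (0 : ℚ) ≤ ∑ i, (v0 i : ℚ) := by positivity
  have hratio : (n0 : ℚ) / n ≤ 1 := by
    rw [div_le_one hnQ]; exact_mod_cast hn0
  have hratio0 : (0 : ℚ) ≤ (n0 : ℚ) / n := by positivity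
  have hexp : ((n : ℚ) - ∑ i, (v0 i : ℚ)) * (n0 / n) = (n0 : ℚ) - (∑ i, (v0 i : ℚ)) * (n0 / n) := by
    field_simp
  rw [hexp] at hsumle
  rw [nsmul_eq_mul] at hsumle
  have hexpand : ((k : ℚ) + 1) * v = (k : ℚ) * v + v := by ring
  have hkv : (0 : ℚ) ≤ (k : ℚ) * v := by positivity
  have hvQ : (1 : ℚ) ≤ v := by exact_mod_cast hv
  linarith [mul_le_of_le_one_right hv0nn hratio, hsumle]
end

section
/- Let c, k ≥ 1 and v ≥ 1 be natural numbers, let v₀, v₁, ..., v_k be vectors in ℕ^c with ‖v_j‖₁ ≤ v for all 0 ≤ j ≤ k and ‖v_j‖₁ ≥ 1 for all 1 ≤ j ≤ k. Let a₁, ..., a_k ∈ ℕ and set h = v₀ + Σ_{j=1}^{k} a_j v_j and n = ‖h‖₁. Let n₀ ≤ n be a positive natural number and for each j let a'_j be a nearest integer to a_j·n₀/n. Set h' = v₀ + Σ_{j=1}^{k} a'_j v_j. Then ‖h'‖₁ ≤ n₀ + (k+1)·v. -/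
/-- Rounding coefficients of a linear combination down to target size `n₀`:
upper bound `‖h'‖₁ ≤ n₀ + (k+1)·v` on the L1 norm of the rounded histogram. -/
theorem rounded_histogram_norm_upper_bound
    (c k v : ℕ) (hc : 1 ≤ c) (hk : 1 ≤ k) (hv : 1 ≤ v)
    (v0 : Fin c → ℕ) (V : Fin k → Fin c → ℕ)
    (hv0 : ∑ i, v0 i ≤ v) (hV : ∀ j, ∑ i, V j i ≤ v) (hV1 : ∀ j, 1 ≤ ∑ i, V j i)
    (a : Fin k → ℕ) (n : ℕ) (hn : n = ∑ i, (v0 i + ∑ j, a j * V j i))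
    (n0 : ℕ) (hn0pos : 0 < n0) (hn0 : n0 ≤ n)
    (a' : Fin k → ℕ) (ha' : ∀ j, |(a' j : ℚ) - (a j : ℚ) * n0 / n| ≤ 1 / 2) :
    ((∑ i, (v0 i + ∑ j, a' j * V j i) : ℕ) : ℚ) ≤ (n0 : ℚ) + (k + 1) * v := by
  have hnpos : 0 < n := lt_of_lt_of_le hn0pos hn0
  have hnQ : (0:ℚ) < n := by exact_mod_cast hnpos
  have key : (∑ i, (v0 i + ∑ j, a' j * V j i) : ℕ)
      = (∑ i, v0 i) + ∑ j, a' j * ∑ i, V j i := by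
    rw [Finset.sum_add_distrib, Finset.sum_comm]
    simp [Finset.mul_sum]
  have keyn : n = (∑ i, v0 i) + ∑ j, a j * ∑ i, V j i := by
    rw [hn, Finset.sum_add_distrib, Finset.sum_comm]
    simp [Finset.mul_sum]
  set S0 : ℚ := ((∑ i, v0 i : ℕ) : ℚ) with hS0
  set S : Fin k → ℚ := fun j => ((∑ i, V j i : ℕ) : ℚ) with hS
  have hSnn : ∀ j, (0:ℚ) ≤ S j := fun j => by positivity
  have hSv : ∀ j, S j ≤ v := fun j => by
    show ((∑ i, V j i : ℕ):ℚ) ≤ v; exact_mod_cast hV j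
  have hS0v : S0 ≤ v := by show ((∑ i, v0 i : ℕ):ℚ) ≤ v; exact_mod_cast hv0
  have hnQeq : (n:ℚ) = S0 + ∑ j, (a j : ℚ) * S j := by
    simp only [hS0, hS]; rw [keyn]; push_cast; ring
  have hstep : ∀ j, (a' j : ℚ) * S j ≤ ((a j : ℚ) * n0 / n) * S j + (1/2) * S j := by
    intro j
    have h2 := (abs_le.mp (ha' j)).2
    nlinarith [hSnn j]
  have hsum : ∑ j, (a' j : ℚ) * S j
      ≤ (n0 / n) * (∑ j, (a j : ℚ) * S j) + (1/2) * (k * v) := by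
    calc ∑ j, (a' j : ℚ) * S j
        ≤ ∑ j, (((a j : ℚ) * n0 / n) * S j + (1/2) * S j) :=
          Finset.sum_le_sum fun j _ => hstep j
      _ = (n0 / n) * (∑ j, (a j : ℚ) * S j) + (1/2) * ∑ j, S j := by
          rw [Finset.sum_add_distrib, Finset.mul_sum, Finset.mul_sum]
          congr 1
          · exact Finset.sum_congr rfl fun j _ => by ring
      _ ≤ (n0 / n) * (∑ j, (a j : ℚ) * S j) + (1/2) * (k * v) := by
          gcongr
          calc ∑ j, S j ≤ ∑ _j : Fin k, (v:ℚ) := Finset.sum_le_sum fun j _ => hSv j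
            _ = k * v := by simp [mul_comm]
  have hA : ∑ j, (a j : ℚ) * S j ≤ n := by
    rw [hnQeq]; nlinarith [hS0v, hv]
  have hAnn : (0:ℚ) ≤ ∑ j, (a j : ℚ) * S j :=
    Finset.sum_nonneg fun j _ => by positivity
  have hfrac : (n0 / n : ℚ) * (∑ j, (a j : ℚ) * S j) ≤ n0 := by
    have hle : (n0 / n : ℚ) * (∑ j, (a j : ℚ) * S j) ≤ (n0 / n) * n := by
      apply mul_le_mul_of_nonneg_left hA; positivity
    calc (n0 / n : ℚ) * (∑ j, (a j : ℚ) * S j) ≤ (n0 / n) * n := hle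
      _ = n0 := by field_simp
  have lhs_eq : ((∑ i, (v0 i + ∑ j, a' j * V j i) : ℕ) : ℚ)
      = S0 + ∑ j, (a' j : ℚ) * S j := by
    simp only [hS0, hS]; rw [key]; push_cast; ring
  rw [lhs_eq]
  have hkv : (1/2 : ℚ) * (k * v) ≤ k * v := by
    have : (0:ℚ) ≤ k * v := by positivity
    linarith
  linarith [hsum, hfrac, hS0v]
end

section
/- Let c, k ≥ 1 and v ≥ 1 be natural numbers, and let v₀, v₁, ..., v_k ∈ ℕ^c satisfy ‖v_j‖₁ ≤ v for all 0 ≤ j ≤ k and ‖v_j‖₁ ≥ 1 for 1 ≤ j ≤ k. Let a₁, ..., a_k ∈ ℕ, h = v₀ + Σ_j a_j v_j, n = ‖h‖₁. Let n₀ be a natural number with (k+1)v < n₀ ≤ n, let a'_j be the nearest integer to a_j·n₀/n for each j, and set h' = v₀ + Σ_j a'_j v_j with n' = ‖h'‖₁. Then for every coordinate index i, |h[i]/n − h'[i]/n'| ≤ (k+1)v·(2(k+1)v + 1)/(n₀ − (k+1)v). -/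
/-- Componentwise bound on the difference of the normalized histogram `h/n` and
the normalized rounded histogram `h'/n'`. -/
theorem rounded_histogram_distribution_bound
    (c k v : ℕ) (hc : 1 ≤ c) (hk : 1 ≤ k) (hv : 1 ≤ v)
    (v0 : Fin c → ℕ) (V : Fin k → Fin c → ℕ)
    (hv0 : ∑ i, v0 i ≤ v) (hV : ∀ j, ∑ i, V j i ≤ v) (hV1 : ∀ j, 1 ≤ ∑ i, V j i)
    (a : Fin k → ℕ) (h : Fin c → ℕ) (hh : h = fun i => v0 i + ∑ j, a j * V j i)
    (n : ℕ) (hn : n = ∑ i, h i)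
    (n0 : ℕ) (hn0lb : (k + 1) * v < n0) (hn0 : n0 ≤ n)
    (a' : Fin k → ℕ) (ha' : ∀ j, |(a' j : ℚ) - (a j : ℚ) * n0 / n| ≤ 1 / 2)
    (h' : Fin c → ℕ) (hh' : h' = fun i => v0 i + ∑ j, a' j * V j i)
    (n' : ℕ) (hn' : n' = ∑ i, h' i) :
    ∀ i : Fin c, |(h i : ℚ) / n - (h' i : ℚ) / n'| ≤
      ((k + 1) * v : ℚ) * (2 * ((k + 1) * v) + 1) / (n0 - (k + 1) * v) := by
  have hkQ : (1:ℚ) ≤ (k:ℚ) := by exact_mod_cast hk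
  have hvQ : (1:ℚ) ≤ (v:ℚ) := by exact_mod_cast hv
  set K : ℚ := ((k:ℚ) + 1) * (v:ℚ) with hKdef
  have hK2 : (2:ℚ) ≤ K := by nlinarith
  have hKn0 : K < (n0:ℚ) := by
    have h3 : (((k+1)*v : ℕ) : ℚ) < (n0:ℚ) := by exact_mod_cast hn0lb
    push_cast at h3
    linarith
  have hn0pos : (0:ℚ) < (n0:ℚ) := by linarith
  have hn0ne : (n0:ℚ) ≠ 0 := ne_of_gt hn0pos
  have hnQ : (n0:ℚ) ≤ (n:ℚ) := by exact_mod_cast hn0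
  have hnpos : (0:ℚ) < (n:ℚ) := by linarith
  have hnne : (n:ℚ) ≠ 0 := ne_of_gt hnpos
  -- per-coordinate bound
  have key : ∀ i, |(h' i : ℚ) - (n0:ℚ)/(n:ℚ) * (h i : ℚ)|
      ≤ (v0 i : ℚ) + (1/2) * ∑ j, (V j i : ℚ) := by
    intro i
    have hsum2 : ∑ j, ((a' j : ℚ) - (a j : ℚ) * (n0:ℚ) / (n:ℚ)) * (V j i : ℚ)
        = ∑ j, (a' j : ℚ) * (V j i : ℚ)
          - (n0:ℚ)/(n:ℚ) * ∑ j, (a j : ℚ) * (V j i : ℚ) := by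
      rw [Finset.mul_sum, ← Finset.sum_sub_distrib]
      exact Finset.sum_congr rfl (fun j _ => by ring)
    have e : (h' i : ℚ) - (n0:ℚ)/(n:ℚ) * (h i : ℚ)
        = (v0 i : ℚ) * (1 - (n0:ℚ)/(n:ℚ))
          + ∑ j, ((a' j : ℚ) - (a j : ℚ) * (n0:ℚ) / (n:ℚ)) * (V j i : ℚ) := by
      subst hh hh'
      push_cast
      rw [hsum2]; ring
    rw [e]
    have hfrac0 : (0:ℚ) ≤ (n0:ℚ)/(n:ℚ) := by positivity
    have hfrac1 : (n0:ℚ)/(n:ℚ) ≤ 1 := by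
      rw [div_le_one hnpos]; exact hnQ
    calc |(v0 i : ℚ) * (1 - (n0:ℚ)/(n:ℚ))
          + ∑ j, ((a' j : ℚ) - (a j : ℚ) * (n0:ℚ) / (n:ℚ)) * (V j i : ℚ)|
        ≤ |(v0 i : ℚ) * (1 - (n0:ℚ)/(n:ℚ))|
          + |∑ j, ((a' j : ℚ) - (a j : ℚ) * (n0:ℚ) / (n:ℚ)) * (V j i : ℚ)| :=
          abs_add_le _ _
      _ ≤ (v0 i : ℚ) * 1 + ∑ j, (1/2) * (V j i : ℚ) := by
          refine add_le_add ?_ ?_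
          · rw [abs_mul, abs_of_nonneg (by positivity : (0:ℚ) ≤ (v0 i:ℚ))]
            refine mul_le_mul_of_nonneg_left ?_ (by positivity)
            rw [abs_of_nonneg (by linarith)]
            linarith
          · refine le_trans (Finset.abs_sum_le_sum_abs _ _) ?_
            refine Finset.sum_le_sum (fun j _ => ?_)
            rw [abs_mul, abs_of_nonneg (by positivity : (0:ℚ) ≤ (V j i:ℚ))]
            exact mul_le_mul_of_nonneg_right (ha' j) (by positivity)
      _ = (v0 i : ℚ) + (1/2) * ∑ j, (V j i : ℚ) := by
          rw [Finset.mul_sum]; ring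
  -- bounds on the per-coordinate bound, pointwise and summed
  have hv0i : ∀ i, (v0 i : ℚ) ≤ (v:ℚ) := by
    intro i
    exact_mod_cast le_trans
      (Finset.single_le_sum (f := fun i => v0 i) (fun _ _ => Nat.zero_le _)
        (Finset.mem_univ i)) hv0
  have hVi : ∀ i, ∑ j, (V j i : ℚ) ≤ (k:ℚ) * (v:ℚ) := by
    intro i
    calc ∑ j, (V j i : ℚ) ≤ ∑ _j : Fin k, (v:ℚ) := by
          refine Finset.sum_le_sum (fun j _ => ?_)
          exact_mod_cast le_trans
            (Finset.single_le_sum (f := fun i' => V j i') (fun _ _ => Nat.zero_le _)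
              (Finset.mem_univ i)) (hV j)
      _ = (k:ℚ) * (v:ℚ) := by simp [mul_comm]
  have keyK : ∀ i, |(h' i : ℚ) - (n0:ℚ)/(n:ℚ) * (h i : ℚ)| ≤ K := by
    intro i
    refine le_trans (key i) ?_
    have := hv0i i
    have := hVi i
    nlinarith
  -- |n' - n0| ≤ K
  have hsum : (n':ℚ) - (n0:ℚ) = ∑ i, ((h' i : ℚ) - (n0:ℚ)/(n:ℚ) * (h i : ℚ)) := by
    rw [Finset.sum_sub_distrib, ← Finset.mul_sum]
    have h1 : ∑ i, (h' i : ℚ) = (n':ℚ) := by rw [hn']; push_cast; ring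
    have h2 : ∑ i, (h i : ℚ) = (n:ℚ) := by rw [hn]; push_cast; ring
    rw [h1, h2, div_mul_cancel₀ _ hnne]
  have habs : |(n':ℚ) - (n0:ℚ)| ≤ K := by
    rw [hsum]
    refine le_trans (Finset.abs_sum_le_sum_abs _ _) ?_
    refine le_trans (Finset.sum_le_sum (fun i _ => key i)) ?_
    rw [Finset.sum_add_distrib, ← Finset.mul_sum]
    have hA : ∑ i, (v0 i : ℚ) ≤ (v:ℚ) := by exact_mod_cast hv0
    have hB : ∑ i, ∑ j, (V j i : ℚ) ≤ (k:ℚ) * (v:ℚ) := by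
      rw [Finset.sum_comm]
      calc ∑ j, ∑ i, (V j i : ℚ) ≤ ∑ _j : Fin k, (v:ℚ) := by
            refine Finset.sum_le_sum (fun j _ => ?_)
            exact_mod_cast hV j
        _ = (k:ℚ) * (v:ℚ) := by simp [mul_comm]
    nlinarith
  have hn'lb : (n0:ℚ) - K ≤ (n':ℚ) := by
    have := abs_le.mp habs
    linarith [this.1]
  have hn'pos : (0:ℚ) < (n':ℚ) := by linarith
  have hn'ne : (n':ℚ) ≠ 0 := ne_of_gt hn'pos
  have hdenpos : (0:ℚ) < (n0:ℚ) - K := by linarith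
  -- final bound
  intro i
  have hy : (h' i : ℚ) ≤ (n':ℚ) := by
    have : h' i ≤ n' := by
      rw [hn']
      exact Finset.single_le_sum (f := fun i => h' i) (fun _ _ => Nat.zero_le _)
        (Finset.mem_univ i)
    exact_mod_cast this
  have hx : (h i : ℚ) / (n:ℚ) = ((n0:ℚ)/(n:ℚ) * (h i : ℚ)) / (n0:ℚ) := by
    field_simp
  rw [hx, div_sub_div _ _ hn0ne hn'ne, abs_div,
    abs_of_pos (mul_pos hn0pos hn'pos)]
  have hnum : |(n0:ℚ)/(n:ℚ) * (h i : ℚ) * (n':ℚ) - (n0:ℚ) * (h' i : ℚ)|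
      ≤ 2 * K * (n':ℚ) := by
    have e : (n0:ℚ)/(n:ℚ) * (h i : ℚ) * (n':ℚ) - (n0:ℚ) * (h' i : ℚ)
        = ((n0:ℚ)/(n:ℚ) * (h i : ℚ) - (h' i : ℚ)) * (n':ℚ)
          + (h' i : ℚ) * ((n':ℚ) - (n0:ℚ)) := by ring
    rw [e]
    calc |((n0:ℚ)/(n:ℚ) * (h i : ℚ) - (h' i : ℚ)) * (n':ℚ)
          + (h' i : ℚ) * ((n':ℚ) - (n0:ℚ))|
        ≤ |((n0:ℚ)/(n:ℚ) * (h i : ℚ) - (h' i : ℚ)) * (n':ℚ)|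
          + |(h' i : ℚ) * ((n':ℚ) - (n0:ℚ))| := abs_add_le _ _
      _ = |(n0:ℚ)/(n:ℚ) * (h i : ℚ) - (h' i : ℚ)| * (n':ℚ)
          + (h' i : ℚ) * |(n':ℚ) - (n0:ℚ)| := by
          rw [abs_mul, abs_mul, abs_of_pos hn'pos,
            abs_of_nonneg (by positivity : (0:ℚ) ≤ (h' i:ℚ))]
      _ ≤ K * (n':ℚ) + (n':ℚ) * K := by
          refine add_le_add ?_ ?_
          · refine mul_le_mul_of_nonneg_right ?_ hn'pos.le
            have := keyK i
            calc |(n0:ℚ)/(n:ℚ) * (h i : ℚ) - (h' i : ℚ)|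
                = |(h' i : ℚ) - (n0:ℚ)/(n:ℚ) * (h i : ℚ)| := abs_sub_comm _ _
              _ ≤ K := keyK i
          · exact mul_le_mul hy habs (abs_nonneg _) hn'pos.le
      _ = 2 * K * (n':ℚ) := by ring
  calc |(n0:ℚ)/(n:ℚ) * (h i : ℚ) * (n':ℚ) - (n0:ℚ) * (h' i : ℚ)| / ((n0:ℚ) * (n':ℚ))
      ≤ (2 * K * (n':ℚ)) / ((n0:ℚ) * (n':ℚ)) := by
        gcongr
    _ ≤ K * (2 * K + 1) / ((n0:ℚ) - K) := by
        rw [div_le_div_iff₀ (mul_pos hn0pos hn'pos) hdenpos]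
        nlinarith [mul_pos (mul_pos (show (0:ℚ) < K by linarith) hn0pos) hn'pos,
          mul_pos (mul_pos (show (0:ℚ) < K by linarith) (show (0:ℚ) < K by linarith)) hn'pos]
end

section
/- Let c, k ≥ 1 and v ≥ 1 be natural numbers, and let M = { v₀ + a₁v₁ + ... + a_k v_k : a₁,...,a_k ∈ ℕ } be a linear subset of ℕ^c with ‖v_j‖₁ ≤ v for all 0 ≤ j ≤ k and ‖v_j‖₁ ≥ 1 for 1 ≤ j ≤ k. Let ε ∈ (0,1] be rational. Then for every h ∈ M with ‖h‖₁ = n > 0, there exists h₀ ∈ M with ‖h₀‖₁ > 0, ‖h₀‖₁ ≤ (k+1)v·(3c(k+1)v/ε + 2), and ‖ h/n − h₀/‖h₀‖₁ ‖₁ ≤ ε. -/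
set_option maxHeartbeats 1000000 in
/-- Explicit quantitative version of Alon's theorem for a linear set of histograms:
every member `h` of the linear set `M = {v₀ + Σ aⱼ vⱼ}` with `‖h‖₁ = n > 0` has a
member `h₀` of `M` of small positive L1 norm whose normalization is `ε`-close in L1
distance to that of `h`. -/
theorem small_member_with_close_distribution
    (c k v : ℕ) (hc : 1 ≤ c) (hk : 1 ≤ k) (hv : 1 ≤ v)
    (v0 : Fin c → ℕ) (V : Fin k → Fin c → ℕ)
    (hv0 : ∑ i, v0 i ≤ v) (hV : ∀ j, ∑ i, V j i ≤ v) (hV1 : ∀ j, 1 ≤ ∑ i, V j i)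
    (ε : ℚ) (hε0 : 0 < ε) (hε1 : ε ≤ 1)
    (a : Fin k → ℕ) (h : Fin c → ℕ) (hh : h = fun i => v0 i + ∑ j, a j * V j i)
    (n : ℕ) (hn : n = ∑ i, h i) (hnpos : 0 < n) :
    ∃ b : Fin k → ℕ,
      0 < ∑ i, (v0 i + ∑ j, b j * V j i) ∧
      ((∑ i, (v0 i + ∑ j, b j * V j i) : ℕ) : ℚ) ≤
        ((k + 1) * v : ℚ) * (3 * c * ((k + 1) * v) / ε + 2) ∧
      ∑ i, |(h i : ℚ) / n -
          ((v0 i + ∑ j, b j * V j i : ℕ) : ℚ) / ((∑ i', (v0 i' + ∑ j, b j * V j i') : ℕ) : ℚ)|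
        ≤ ε := by
  set Kq : ℚ := ((k : ℚ) + 1) * (v : ℚ) with hKq
  have hK2 : (2:ℚ) ≤ Kq := by
    have hk' : (1:ℚ) ≤ (k:ℚ) := by exact_mod_cast hk
    have hv' : (1:ℚ) ≤ (v:ℚ) := by exact_mod_cast hv
    nlinarith
  have hc' : (1:ℚ) ≤ (c:ℚ) := by exact_mod_cast hc
  have hKpos : (0:ℚ) < Kq := by linarith
  have hnq : (0:ℚ) < (n:ℚ) := by exact_mod_cast hnpos
  clear_value Kq
  -- the L1 bound on the weight vector (v0 i + ∑ j, V j i)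
  have hsum_w : ∑ i, ((v0 i : ℚ) + ∑ j, (V j i : ℚ)) ≤ Kq := by
    have hnat : ∑ i, (v0 i + ∑ j, V j i) ≤ (k + 1) * v := by
      rw [Finset.sum_add_distrib, Finset.sum_comm]
      have h1 : ∑ j : Fin k, ∑ i : Fin c, V j i ≤ ∑ j : Fin k, v :=
        Finset.sum_le_sum fun j _ => hV j
      simp only [Finset.sum_const, Finset.card_fin, smul_eq_mul] at h1
      calc ∑ i, v0 i + ∑ j : Fin k, ∑ i : Fin c, V j i ≤ v + k * v := by omega
        _ = (k + 1) * v := by ring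
    calc ∑ i, ((v0 i : ℚ) + ∑ j, (V j i : ℚ)) = ((∑ i, (v0 i + ∑ j, V j i) : ℕ) : ℚ) := by
          push_cast; ring
      _ ≤ (((k+1)*v : ℕ) : ℚ) := by exact_mod_cast hnat
      _ = Kq := by rw [hKq]; push_cast; ring
  by_cases hcase : (n:ℚ) * ε ≤ 6 * Kq
  · -- small n: take b = a
    refine ⟨a, ?_, ?_, ?_⟩
    · have hsum : ∑ i, (v0 i + ∑ j, a j * V j i) = n := by rw [hn, hh]
      omega
    · have hsum : ∑ i, (v0 i + ∑ j, a j * V j i) = n := by rw [hn, hh]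
      rw [hsum]
      have hexp : Kq * (3 * (c:ℚ) * Kq / ε + 2) = 3 * c * Kq^2 / ε + 2 * Kq := by ring
      have hnum : 6 * Kq ≤ 3 * (c:ℚ) * Kq^2 := by nlinarith
      have h6 : (n:ℚ) ≤ 6 * Kq / ε := (le_div_iff₀ hε0).mpr hcase
      have h7 : 6 * Kq / ε ≤ 3 * (c:ℚ) * Kq^2 / ε := (div_le_div_iff_of_pos_right hε0).mpr hnum
      rw [hexp]
      linarith
    · have hsum : ∑ i, (v0 i + ∑ j, a j * V j i) = n := by rw [hn, hh]
      have : ∀ i, ((v0 i + ∑ j, a j * V j i : ℕ) : ℚ) = (h i : ℚ) := by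
        intro i; rw [hh]
      simp only [hsum, this, sub_self, abs_zero, Finset.sum_const, smul_zero]
      linarith
  · -- large n: rescale by D
    push_neg at hcase
    set D : ℕ := ⌈(n:ℚ) * ε / (6 * Kq)⌉₊ with hDdef
    have hx1 : (1:ℚ) < (n:ℚ) * ε / (6 * Kq) := by
      rw [lt_div_iff₀ (by linarith : (0:ℚ) < 6 * Kq)]; linarith
    have hx0 : (0:ℚ) ≤ (n:ℚ) * ε / (6 * Kq) := by linarith
    have hD2 : 2 ≤ D := by
      have := Nat.lt_ceil.mpr (show ((1:ℕ):ℚ) < (n:ℚ) * ε / (6 * Kq) by exact_mod_cast hx1)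
      omega
    have hDpos : (0:ℚ) < (D:ℚ) := by exact_mod_cast (by omega : 0 < D)
    have hD1q : (1:ℚ) ≤ (D:ℚ) := by exact_mod_cast (by omega : 1 ≤ D)
    have hDlb : (n:ℚ) * ε / (6 * Kq) ≤ D := Nat.le_ceil _
    have hDub : (D:ℚ) ≤ (n:ℚ) * ε / (3 * Kq) := by
      have h1 : (D:ℚ) < (n:ℚ) * ε / (6 * Kq) + 1 := Nat.ceil_lt_add_one hx0
      have h2 : (n:ℚ) * ε / (6 * Kq) + 1 ≤ 2 * ((n:ℚ) * ε / (6 * Kq)) := by linarith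
      have h3 : 2 * ((n:ℚ) * ε / (6 * Kq)) = (n:ℚ) * ε / (3 * Kq) := by
        field_simp; ring
      linarith
    set b : Fin k → ℕ := fun j => a j / D with hbdef
    have hbub : ∀ j, (b j : ℚ) ≤ (a j : ℚ) / D := fun j => Nat.cast_div_le
    have hblb : ∀ j, (a j : ℚ) / D - 1 ≤ (b j : ℚ) := by
      intro j
      have h1 : (a j : ℚ) < D * (b j) + D := by
        have h2 := Nat.div_add_mod (a j) D
        have h3 := Nat.mod_lt (a j) (show 0 < D by omega)
        exact_mod_cast (show a j < D * (a j / D) + D by omega)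
      rw [sub_le_iff_le_add, div_le_iff₀ hDpos]
      nlinarith
    clear_value b
    clear_value D
    -- per-coordinate deviation bound
    have hhq : ∀ i, (h i : ℚ) = (v0 i : ℚ) + ∑ j, (a j : ℚ) * (V j i : ℚ) := by
      intro i; rw [hh]; push_cast; ring
    have habs : ∀ i, |((v0 i : ℚ) + ∑ j, (b j : ℚ) * (V j i : ℚ)) - (h i : ℚ) / D|
        ≤ (v0 i : ℚ) + ∑ j, (V j i : ℚ) := by
      intro i
      have hBub : ∑ j, (b j : ℚ) * V j i ≤ (∑ j, (a j : ℚ) * V j i) / D := by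
        rw [Finset.sum_div]
        refine Finset.sum_le_sum fun j _ => ?_
        calc (b j : ℚ) * V j i ≤ (a j : ℚ) / D * V j i :=
              mul_le_mul_of_nonneg_right (hbub j) (by positivity)
          _ = (a j : ℚ) * V j i / D := by ring
      have hBlb : (∑ j, (a j : ℚ) * V j i) / D - ∑ j, (V j i : ℚ) ≤ ∑ j, (b j : ℚ) * V j i := by
        rw [Finset.sum_div, ← Finset.sum_sub_distrib]
        refine Finset.sum_le_sum fun j _ => ?_
        calc (a j : ℚ) * V j i / D - (V j i : ℚ) = ((a j : ℚ) / D - 1) * V j i := by ring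
          _ ≤ (b j : ℚ) * V j i := mul_le_mul_of_nonneg_right (hblb j) (by positivity)
      have hv0q : (0:ℚ) ≤ (v0 i : ℚ) := by positivity
      have hwq : (0:ℚ) ≤ ∑ j, (V j i : ℚ) := by positivity
      have hsq : (0:ℚ) ≤ ∑ j, (a j : ℚ) * V j i := by positivity
      have hdivle : (v0 i : ℚ) / D ≤ (v0 i : ℚ) := div_le_self hv0q hD1q
      have hdiv0 : (0:ℚ) ≤ (v0 i : ℚ) / D := by positivity
      have hsplit : (h i : ℚ) / D = (v0 i : ℚ) / D + (∑ j, (a j : ℚ) * V j i) / D := by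
        rw [hhq i, add_div]
      rw [abs_le]
      constructor
      · rw [hsplit]; linarith
      · rw [hsplit]; linarith
    -- total weight of h₀
    set m : ℕ := ∑ i, (v0 i + ∑ j, b j * V j i) with hmdef
    have hmq : (m:ℚ) = ∑ i, ((v0 i : ℚ) + ∑ j, (b j : ℚ) * V j i) := by
      rw [hmdef]; push_cast; ring
    clear_value m
    have hnD : (n:ℚ) / D = ∑ i, (h i : ℚ) / D := by
      rw [← Finset.sum_div, hn]; push_cast; ring
    have hEabs : |(m:ℚ) - (n:ℚ) / D| ≤ Kq := by
      rw [hmq, hnD, ← Finset.sum_sub_distrib]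
      calc |∑ i, (((v0 i : ℚ) + ∑ j, (b j : ℚ) * V j i) - (h i : ℚ) / D)|
          ≤ ∑ i, |((v0 i : ℚ) + ∑ j, (b j : ℚ) * V j i) - (h i : ℚ) / D| :=
            Finset.abs_sum_le_sum_abs _ _
        _ ≤ ∑ i, ((v0 i : ℚ) + ∑ j, (V j i : ℚ)) := Finset.sum_le_sum fun i _ => habs i
        _ ≤ Kq := hsum_w
    -- n/D bounds
    have hnD_lb : 3 * Kq / ε ≤ (n:ℚ) / D := by
      rw [div_le_div_iff₀ hε0 hDpos]
      have : (D:ℚ) * (3 * Kq) ≤ (n:ℚ) * ε := by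
        rw [le_div_iff₀ (by linarith : (0:ℚ) < 3 * Kq)] at hDub
        linarith [hDub]
      linarith
    have hnD_ub : (n:ℚ) / D ≤ 6 * Kq / ε := by
      rw [div_le_div_iff₀ hDpos hε0]
      rw [div_le_iff₀ (by linarith : (0:ℚ) < 6 * Kq)] at hDlb
      linarith
    have hKe : Kq ≤ Kq / ε := by
      rw [le_div_iff₀ hε0]
      exact mul_le_of_le_one_right (le_of_lt hKpos) hε1
    have hm_lb : 2 * Kq / ε ≤ (m:ℚ) := by
      have h1 : (n:ℚ)/D - Kq ≤ (m:ℚ) := by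
        have := abs_le.mp hEabs
        linarith [this.1]
      have : 2 * Kq / ε = 3 * Kq / ε - Kq / ε := by ring
      linarith
    have hmq_pos : (0:ℚ) < (m:ℚ) := by
      have : (0:ℚ) < 2 * Kq / ε := by positivity
      linarith
    have hm_pos : 0 < m := by exact_mod_cast hmq_pos
    refine ⟨b, ?_, ?_, ?_⟩
    · rw [← hmdef]; exact hm_pos
    · -- size bound
      rw [← hmdef]
      have h1 : (m:ℚ) ≤ (n:ℚ)/D + Kq := by
        have := abs_le.mp hEabs
        linarith [this.2]
      have h2 : (m:ℚ) ≤ 6 * Kq / ε + Kq := by linarith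
      have hexp : Kq * (3 * (c:ℚ) * Kq / ε + 2) = 3 * c * Kq^2 / ε + 2 * Kq := by ring
      have hnum : 6 * Kq ≤ 3 * (c:ℚ) * Kq^2 := by nlinarith
      have h7 : 6 * Kq / ε ≤ 3 * (c:ℚ) * Kq^2 / ε := (div_le_div_iff_of_pos_right hε0).mpr hnum
      rw [hexp]
      linarith
    · -- L1 closeness
      have hmne : (m:ℚ) ≠ 0 := ne_of_gt hmq_pos
      have hnne : (n:ℚ) ≠ 0 := ne_of_gt hnq
      have hDne : (D:ℚ) ≠ 0 := ne_of_gt hDpos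
      rw [show (∑ i', (v0 i' + ∑ j, b j * V j i') : ℕ) = m from hmdef.symm]
      set t : ℚ := |1/(n:ℚ) - 1/((D:ℚ)*(m:ℚ))| with htdef
      have hper : ∀ i, |(h i : ℚ)/n - ((v0 i + ∑ j, b j * V j i : ℕ) : ℚ)/(m:ℚ)|
          ≤ (h i : ℚ) * t + ((v0 i : ℚ) + ∑ j, (V j i : ℚ)) / m := by
        intro i
        have hcast : ((v0 i + ∑ j, b j * V j i : ℕ) : ℚ) = (v0 i : ℚ) + ∑ j, (b j : ℚ) * V j i := by
          push_cast; ring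
        rw [hcast]
        have hiden : (h i : ℚ)/n - ((v0 i : ℚ) + ∑ j, (b j : ℚ) * V j i)/m
            = (h i : ℚ) * (1/(n:ℚ) - 1/((D:ℚ)*(m:ℚ)))
              + ((h i : ℚ)/D - ((v0 i : ℚ) + ∑ j, (b j : ℚ) * V j i))/m := by
          field_simp
          ring
        rw [hiden]
        calc |(h i : ℚ) * (1/(n:ℚ) - 1/((D:ℚ)*(m:ℚ)))
              + ((h i : ℚ)/D - ((v0 i : ℚ) + ∑ j, (b j : ℚ) * V j i))/m|
            ≤ |(h i : ℚ) * (1/(n:ℚ) - 1/((D:ℚ)*(m:ℚ)))|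
              + |((h i : ℚ)/D - ((v0 i : ℚ) + ∑ j, (b j : ℚ) * V j i))/m| := abs_add_le _ _
          _ ≤ (h i : ℚ) * t + ((v0 i : ℚ) + ∑ j, (V j i : ℚ)) / m := by
              gcongr ?_ + ?_
              · rw [abs_mul, abs_of_nonneg (by positivity : (0:ℚ) ≤ (h i : ℚ))]
              · rw [abs_div, abs_of_pos hmq_pos, abs_sub_comm]
                exact (div_le_div_iff_of_pos_right hmq_pos).mpr (habs i)
      calc ∑ i, |(h i : ℚ)/n - ((v0 i + ∑ j, b j * V j i : ℕ) : ℚ)/(m:ℚ)|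
          ≤ ∑ i, ((h i : ℚ) * t + ((v0 i : ℚ) + ∑ j, (V j i : ℚ)) / m) :=
            Finset.sum_le_sum fun i _ => hper i
        _ = (n:ℚ) * t + (∑ i, ((v0 i : ℚ) + ∑ j, (V j i : ℚ))) / m := by
            rw [Finset.sum_add_distrib, ← Finset.sum_mul, ← Finset.sum_div]
            congr 2
            rw [hn]; push_cast; ring
        _ ≤ Kq / m + Kq / m := by
            gcongr ?_ + ?_
            · -- n * t ≤ Kq / m
              have hnt : (n:ℚ) * t = |1 - (n:ℚ)/((D:ℚ)*(m:ℚ))| := by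
                rw [htdef, ← abs_of_pos hnq, ← abs_mul]
                congr 1
                field_simp
                rw [abs_of_pos hnq]
              have hid : 1 - (n:ℚ)/((D:ℚ)*(m:ℚ)) = ((m:ℚ) - (n:ℚ)/D)/m := by
                field_simp
              rw [hnt, hid, abs_div, abs_of_pos hmq_pos]
              exact (div_le_div_iff_of_pos_right hmq_pos).mpr hEabs
            · exact (div_le_div_iff_of_pos_right hmq_pos).mpr hsum_w
        _ = 2 * Kq / m := by ring
        _ ≤ ε := by
            rw [div_le_iff₀ hmq_pos]
            rw [div_le_iff₀ hε0] at hm_lb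
            nlinarith
end

section
/- Let n, n', n₀ be positive rationals with 0 < n₀ − δ ≤ n' ≤ n₀ + δ < n for some δ > 0, let a, a' ≥ 0 be rationals with a ≤ n and |a' − a·n₀/n| ≤ 1/2, and let w ≥ 0 be a rational. Then | w·(a/n − a'/n') | ≤ w·(2δ + 1)/(2(n₀ − δ)). -/
/-- Core rounding estimate: if `0 < n₀ - δ ≤ n' ≤ n₀ + δ < n`, `0 ≤ a ≤ n`,
`a'` is within `1/2` of `a·n₀/n`, and `w ≥ 0`, then
`|w(a/n - a'/n')| ≤ w(2δ+1)/(2(n₀-δ))`. -/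
theorem rounding_estimate
    (n n' n0 δ a a' w : ℚ)
    (hn : 0 < n) (hn' : 0 < n') (hn0 : 0 < n0) (hδ : 0 < δ)
    (h1 : 0 < n0 - δ) (h2 : n0 - δ ≤ n') (h3 : n' ≤ n0 + δ) (h4 : n0 + δ < n)
    (ha0 : 0 ≤ a) (han : a ≤ n) (ha'0 : 0 ≤ a')
    (hround : |a' - a * n0 / n| ≤ 1 / 2) (hw : 0 ≤ w) :
    |w * (a / n - a' / n')| ≤ w * (2 * δ + 1) / (2 * (n0 - δ)) := by
  have hq : a / n ≤ 1 := by rw [div_le_one hn]; exact han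
  have hq0 : 0 ≤ a / n := div_nonneg ha0 hn.le
  have hdecomp : a / n - a' / n' =
      ((a / n) * (n' - n0) + (a * n0 / n - a')) / n' := by
    field_simp
    ring
  have h5 : |(a / n) * (n' - n0)| ≤ δ := by
    rw [abs_mul, abs_of_nonneg hq0]
    have hd : |n' - n0| ≤ δ := by rw [abs_le]; constructor <;> linarith
    calc (a / n) * |n' - n0| ≤ 1 * δ :=
          mul_le_mul hq hd (abs_nonneg _) zero_le_one
      _ = δ := one_mul δ
  have h6 : |a * n0 / n - a'| ≤ 1 / 2 := by rw [abs_sub_comm]; exact hround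
  have hnum : |(a / n) * (n' - n0) + (a * n0 / n - a')| ≤ δ + 1 / 2 := by
    calc |(a / n) * (n' - n0) + (a * n0 / n - a')|
        ≤ |(a / n) * (n' - n0)| + |a * n0 / n - a'| := abs_add_le _ _
      _ ≤ δ + 1 / 2 := by linarith
  have key : |a / n - a' / n'| ≤ (2 * δ + 1) / (2 * (n0 - δ)) := by
    rw [hdecomp, abs_div, abs_of_pos hn']
    calc |(a / n) * (n' - n0) + (a * n0 / n - a')| / n'
        ≤ (δ + 1 / 2) / (n0 - δ) := div_le_div₀ (by linarith) hnum h1 h2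
      _ = (2 * δ + 1) / (2 * (n0 - δ)) := by
          rw [div_eq_div_iff h1.ne' (by positivity)]; ring
  calc |w * (a / n - a' / n')| = w * |a / n - a' / n'| := by
        rw [abs_mul, abs_of_nonneg hw]
    _ ≤ w * ((2 * δ + 1) / (2 * (n0 - δ))) :=
        mul_le_mul_of_nonneg_left key hw
    _ = w * (2 * δ + 1) / (2 * (n0 - δ)) := by ring
end
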